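/- Let n ≥ 1, ε > 0, ω_1,…,ω_n > 0, δ_1,…,δ_n ∈ {−1,0,1}, and V(x) := Σ_{j=1}^n δ_j (ω_j²/2) x_j². For each j define g_j, h_j : ℝ → ℝ by: (g_j(t), h_j(t)) = (sinh(ω_j t)/ω_j, cosh(ω_j t)) if δ_j = −1; (t, 1) if δ_j = 0; (sin(ω_j t)/ω_j, cos(ω_j t)) if δ_j = +1. For a smooth u : ℝ × ℝⁿ → ℂ define (J_j u)(t,x) := −δ_j ω_j² g_j(t) (x_j/ε) u(t,x) + i h_j(t) ∂_{x_j}u(t,x) and (H_j u)(t,x) := h_j(t) x_j u(t,x) + i ε g_j(t) ∂_{x_j}u(t,x). Then for every smooth u and every j, writing L u := iε∂_t u + (ε²/2)Δu − V u, one has the pointwise commutation identities L(J_j u) = J_j(L u) and L(H_j u) = H_j(L u) on ℝ × ℝⁿ. -/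

import Mathlib

open MeasureTheory Real Complex
open scoped ENNReal NNReal

noncomputable section

/-- `ℝⁿ`: n-dimensional Euclidean space. -/
abbrev Eucl (n : ℕ) := EuclideanSpace ℝ (Fin n)

/-- Partial derivative in the `j`-th coordinate direction. -/
def pd {n : ℕ} (j : Fin n) (f : Eucl n → ℂ) (x : Eucl n) : ℂ :=
  fderiv ℝ f x (EuclideanSpace.single j 1)

/-- Laplacian in the space variables. -/
def lap {n : ℕ} (f : Eucl n → ℂ) (x : Eucl n) : ℂ := ∑ j, pd j (pd j f) x

/-- The function `g_j`: `sinh(ωt)/ω` if `δ = −1`, `t` if `δ = 0`, `sin(ωt)/ω` if `δ = +1`. -/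
def gfun (δ ω t : ℝ) : ℝ :=
  if δ = -1 then Real.sinh (ω*t) / ω else if δ = 0 then t else Real.sin (ω*t) / ω

/-- The function `h_j`: `cosh(ωt)` if `δ = −1`, `1` if `δ = 0`, `cos(ωt)` if `δ = +1`. -/
def hfun (δ ω t : ℝ) : ℝ :=
  if δ = -1 then Real.cosh (ω*t) else if δ = 0 then 1 else Real.cos (ω*t)

/-- The Heisenberg observable `J_j`:
`(J_j u)(t,x) = −δ_j ω_j² g_j(t) (x_j/ε) u(t,x) + i h_j(t) ∂_{x_j} u(t,x)`. -/
def Jop {n : ℕ} (ε : ℝ) (δ ω : Fin n → ℝ) (j : Fin n) (u : ℝ → Eucl n → ℂ) :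
    ℝ → Eucl n → ℂ :=
  fun t x => ((-(δ j) * (ω j)^2 * gfun (δ j) (ω j) t * (x j / ε) : ℝ) : ℂ) * u t x +
    Complex.I * ((hfun (δ j) (ω j) t : ℝ) : ℂ) * pd j (u t) x

/-- The Heisenberg observable `H_j`:
`(H_j u)(t,x) = h_j(t) x_j u(t,x) + i ε g_j(t) ∂_{x_j} u(t,x)`. -/
def Hop {n : ℕ} (ε : ℝ) (δ ω : Fin n → ℝ) (j : Fin n) (u : ℝ → Eucl n → ℂ) :
    ℝ → Eucl n → ℂ :=
  fun t x => ((hfun (δ j) (ω j) t * x j : ℝ) : ℂ) * u t x +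
    Complex.I * ε * ((gfun (δ j) (ω j) t : ℝ) : ℂ) * pd j (u t) x

/-- The linear Schrödinger operator `L u = iε∂ₜu + (ε²/2)Δu − V u`. -/
def Lop {n : ℕ} (ε : ℝ) (V : Eucl n → ℝ) (u : ℝ → Eucl n → ℂ) : ℝ → Eucl n → ℂ :=
  fun t x => Complex.I * ε * deriv (fun s => u s x) t + (ε^2/2) * lap (u t) x -
    ((V x : ℝ) : ℂ) * u t x


section Helpers
variable {n : ℕ}

lemma hle1 : ((⊤:ℕ∞):WithTop ℕ∞) ≠ 0 := by simp

lemma cd_fderiv {f : ℝ × Eucl n → ℂ} (hf : ContDiff ℝ (⊤:ℕ∞) f) :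
    ContDiff ℝ (⊤:ℕ∞) (fderiv ℝ f) := hf.fderiv_right (le_refl _)

lemma cd_fderiv_apply {f : ℝ × Eucl n → ℂ} (hf : ContDiff ℝ (⊤:ℕ∞) f) (v : ℝ × Eucl n) :
    ContDiff ℝ (⊤:ℕ∞) (fun p => fderiv ℝ f p v) :=
  (cd_fderiv hf).clm_apply contDiff_const

lemma fderiv_apply_eq {f : ℝ × Eucl n → ℂ} (hf : ContDiff ℝ (⊤:ℕ∞) f) (p v w : ℝ × Eucl n) :
    fderiv ℝ (fun q => fderiv ℝ f q v) p w = fderiv ℝ (fderiv ℝ f) p w v := by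
  rw [fderiv_clm_apply ((cd_fderiv hf).differentiable hle1 p) (differentiableAt_const v)]
  simp

lemma fderiv_swap {f : ℝ × Eucl n → ℂ} (hf : ContDiff ℝ (⊤:ℕ∞) f) (p v w : ℝ × Eucl n) :
    fderiv ℝ (fun q => fderiv ℝ f q v) p w = fderiv ℝ (fun q => fderiv ℝ f q w) p v := by
  rw [fderiv_apply_eq hf, fderiv_apply_eq hf]
  exact second_derivative_symmetric
    (fun q => ((hf.differentiable hle1) q).hasFDerivAt)
    (((cd_fderiv hf).differentiable hle1 p).hasFDerivAt) w v

lemma hasDerivAt_slice_t {f : ℝ × Eucl n → ℂ} {t : ℝ} {x : Eucl n}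
    (hf : DifferentiableAt ℝ f (t, x)) :
    HasDerivAt (fun s => f (s, x)) (fderiv ℝ f (t, x) (1, 0)) t := by
  have h1 : HasFDerivAt (fun s : ℝ => (s, x)) ((ContinuousLinearMap.id ℝ ℝ).prod 0) t :=
    (hasFDerivAt_id t).prodMk (hasFDerivAt_const x t)
  have := (hf.hasFDerivAt.comp t h1).hasDerivAt
  exact this

lemma slice_t {f : ℝ × Eucl n → ℂ} {t : ℝ} {x : Eucl n} (hf : DifferentiableAt ℝ f (t, x)) :
    deriv (fun s => f (s, x)) t = fderiv ℝ f (t, x) (1, 0) :=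
  (hasDerivAt_slice_t hf).deriv

lemma slice_x {f : ℝ × Eucl n → ℂ} {t : ℝ} {x : Eucl n} (hf : DifferentiableAt ℝ f (t, x))
    (j : Fin n) :
    pd j (fun y => f (t, y)) x = fderiv ℝ f (t, x) (0, EuclideanSpace.single j 1) := by
  have h1 : HasFDerivAt (fun y : Eucl n => (t, y))
      ((0 : Eucl n →L[ℝ] ℝ).prod (ContinuousLinearMap.id ℝ (Eucl n))) x :=
    (hasFDerivAt_const t x).prodMk (hasFDerivAt_id x)
  have h2 := (hf.hasFDerivAt.comp x h1).fderiv
  rw [pd, show (fun y => f (t, y)) = f ∘ Prod.mk t from rfl, h2]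
  simp

lemma diff_slice_t {f : ℝ × Eucl n → ℂ} {t : ℝ} {x : Eucl n} (hf : DifferentiableAt ℝ f (t, x)) :
    DifferentiableAt ℝ (fun s => f (s, x)) t := (hasDerivAt_slice_t hf).differentiableAt

lemma diff_slice_x {f : ℝ × Eucl n → ℂ} {t : ℝ} {x : Eucl n} (hf : DifferentiableAt ℝ f (t, x)) :
    DifferentiableAt ℝ (fun y => f (t, y)) x := by
  have h1 : HasFDerivAt (fun y : Eucl n => (t, y))
      ((0 : Eucl n →L[ℝ] ℝ).prod (ContinuousLinearMap.id ℝ (Eucl n))) x :=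
    (hasFDerivAt_const t x).prodMk (hasFDerivAt_id x)
  exact (hf.hasFDerivAt.comp x h1).differentiableAt

lemma pd_add {f g : Eucl n → ℂ} {x : Eucl n} (j : Fin n)
    (hf : DifferentiableAt ℝ f x) (hg : DifferentiableAt ℝ g x) :
    pd j (fun y => f y + g y) x = pd j f x + pd j g x := by
  simp only [pd, fderiv_fun_add hf hg]; rfl

lemma pd_sub {f g : Eucl n → ℂ} {x : Eucl n} (j : Fin n)
    (hf : DifferentiableAt ℝ f x) (hg : DifferentiableAt ℝ g x) :
    pd j (fun y => f y - g y) x = pd j f x - pd j g x := by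
  simp only [pd, fderiv_fun_sub hf hg]; rfl

lemma pd_const_mul {f : Eucl n → ℂ} {x : Eucl n} (j : Fin n) (c : ℂ)
    (hf : DifferentiableAt ℝ f x) :
    pd j (fun y => c * f y) x = c * pd j f x := by
  simp only [pd, fderiv_const_mul hf]; rfl

lemma pd_real_mul {φ : Eucl n → ℝ} {f : Eucl n → ℂ} {x : Eucl n} (j : Fin n)
    (hφ : DifferentiableAt ℝ φ x) (hf : DifferentiableAt ℝ f x) :
    pd j (fun y => ((φ y : ℝ) : ℂ) * f y) x
      = ((fderiv ℝ φ x (EuclideanSpace.single j 1) : ℝ) : ℂ) * f x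
        + ((φ x : ℝ) : ℂ) * pd j f x := by
  have hc : DifferentiableAt ℝ (fun y => ((φ y : ℝ) : ℂ)) x :=
    Complex.ofRealCLM.differentiableAt.comp x hφ
  have hcd : fderiv ℝ (fun y => ((φ y : ℝ) : ℂ)) x
      = Complex.ofRealCLM.comp (fderiv ℝ φ x) :=
    (Complex.ofRealCLM.hasFDerivAt.comp x hφ.hasFDerivAt).fderiv
  simp only [pd, fderiv_fun_mul hc hf, ContinuousLinearMap.add_apply,
    ContinuousLinearMap.smul_apply, hcd, ContinuousLinearMap.coe_comp', Function.comp_apply,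
    Complex.ofRealCLM_apply, smul_eq_mul]
  ring

lemma fderiv_V_apply (c : Fin n → ℝ) (x : Eucl n) (j : Fin n) :
    fderiv ℝ (fun y : Eucl n => ∑ m, c m * (y m)^2) x (EuclideanSpace.single j 1)
      = 2 * c j * x j := by
  have h : ∀ m : Fin n, HasFDerivAt (fun y : Eucl n => c m * (y m * y m))
      (c m • (x m • (EuclideanSpace.proj m : Eucl n →L[ℝ] ℝ)
        + x m • (EuclideanSpace.proj m : Eucl n →L[ℝ] ℝ))) x := by
    intro m
    have h1 : HasFDerivAt (fun y : Eucl n => y m)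
        (EuclideanSpace.proj m : Eucl n →L[ℝ] ℝ) x :=
      (EuclideanSpace.proj m : Eucl n →L[ℝ] ℝ).hasFDerivAt
    exact (h1.mul h1).const_mul (c m)
  have hsum := HasFDerivAt.fun_sum (fun m (_ : m ∈ Finset.univ) => h m)
  have e : (fun y : Eucl n => ∑ m, c m * (y m)^2) = fun y => ∑ m, c m * (y m * y m) := by
    funext y; exact Finset.sum_congr rfl (fun m _ => by ring)
  rw [e, hsum.fderiv, ContinuousLinearMap.sum_apply]
  rw [Finset.sum_eq_single j]
  · simp [PiLp.proj_apply, EuclideanSpace.single_apply]; ring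
  · intro b _ hb
    simp only [PiLp.proj_apply, EuclideanSpace.single_apply, ContinuousLinearMap.smul_apply,
      ContinuousLinearMap.add_apply, smul_eq_mul]
    simp [hb]
  · simp

lemma diff_V (c : Fin n → ℝ) (x : Eucl n) :
    DifferentiableAt ℝ (fun y : Eucl n => ∑ m, c m * (y m)^2) x := by
  apply DifferentiableAt.fun_sum
  intro m _
  have h1 : DifferentiableAt ℝ (fun y : Eucl n => y m) x :=
    (EuclideanSpace.proj m : Eucl n →L[ℝ] ℝ).differentiableAt
  exact ((h1.fun_mul h1).const_mul _).congr_of_eventuallyEq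
    (Filter.Eventually.of_forall (fun y => by ring))

lemma fderiv_coord_apply (x : Eucl n) (k j : Fin n) :
    fderiv ℝ (fun y : Eucl n => y k) x (EuclideanSpace.single j 1)
      = if j = k then 1 else 0 := by
  rw [show (fun y : Eucl n => y k) = (EuclideanSpace.proj k : Eucl n →L[ℝ] ℝ) from rfl,
    ContinuousLinearMap.fderiv]
  simp [EuclideanSpace.single_apply, eq_comm]

lemma dslice {f : ℝ × Eucl n → ℂ} (hf : ContDiff ℝ (⊤:ℕ∞) f) (t : ℝ) (x : Eucl n) :
    DifferentiableAt ℝ (fun y => f (t, y)) x :=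
  diff_slice_x ((hf.differentiable hle1) _)

lemma diff_coord (a : ℝ) (i : Fin n) (x : Eucl n) :
    DifferentiableAt ℝ (fun y : Eucl n => a * y i) x :=
  ((EuclideanSpace.proj i : Eucl n →L[ℝ] ℝ).differentiableAt).const_mul a

lemma fderiv_coord_mul_apply (a : ℝ) (i k : Fin n) (x : Eucl n) :
    fderiv ℝ (fun y : Eucl n => a * y i) x (EuclideanSpace.single k 1)
      = a * (if k = i then 1 else 0) := by
  have h1 : DifferentiableAt ℝ (fun y : Eucl n => y i) x :=
    (EuclideanSpace.proj i : Eucl n →L[ℝ] ℝ).differentiableAt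
  rw [fderiv_const_mul h1 a]
  simp [fderiv_coord_apply]

lemma pd_comb4 {f₀ f₁ f₂ f₃ : ℝ × Eucl n → ℂ}
    (h0 : ContDiff ℝ (⊤:ℕ∞) f₀) (h1 : ContDiff ℝ (⊤:ℕ∞) f₁) (h2 : ContDiff ℝ (⊤:ℕ∞) f₂)
    (h3 : ContDiff ℝ (⊤:ℕ∞) f₃) (c₀ c₁ c₃ : ℂ) (a : ℝ) (i k : Fin n) (t : ℝ) (x : Eucl n) :
    pd k (fun y => c₀ * f₀ (t, y) + c₁ * f₁ (t, y)
        + ((a * y i : ℝ) : ℂ) * f₂ (t, y) + c₃ * f₃ (t, y)) x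
      = c₀ * fderiv ℝ f₀ (t,x) (0, EuclideanSpace.single k 1)
        + c₁ * fderiv ℝ f₁ (t,x) (0, EuclideanSpace.single k 1)
        + ((a * (if k = i then 1 else 0) : ℝ) : ℂ) * f₂ (t,x)
        + ((a * x i : ℝ) : ℂ) * fderiv ℝ f₂ (t,x) (0, EuclideanSpace.single k 1)
        + c₃ * fderiv ℝ f₃ (t,x) (0, EuclideanSpace.single k 1) := by
  have d0 : DifferentiableAt ℝ (fun y => c₀ * f₀ (t, y)) x := (dslice h0 t x).const_mul c₀
  have d1 : DifferentiableAt ℝ (fun y => c₁ * f₁ (t, y)) x := (dslice h1 t x).const_mul c₁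
  have d2 : DifferentiableAt ℝ (fun y : Eucl n => ((a * y i : ℝ) : ℂ) * f₂ (t, y)) x :=
    ((Complex.ofRealCLM.differentiableAt).comp x (diff_coord a i x)).mul (dslice h2 t x)
  have d3 : DifferentiableAt ℝ (fun y => c₃ * f₃ (t, y)) x := (dslice h3 t x).const_mul c₃
  rw [pd_add k ((d0.fun_add d1).fun_add d2) d3, pd_add k (d0.fun_add d1) d2, pd_add k d0 d1,
    pd_const_mul k c₀ (dslice h0 t x), pd_const_mul k c₁ (dslice h1 t x),
    pd_const_mul k c₃ (dslice h3 t x),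
    pd_real_mul k (diff_coord a i x) (dslice h2 t x),
    fderiv_coord_mul_apply a i k x,
    slice_x ((h0.differentiable hle1) _) k, slice_x ((h1.differentiable hle1) _) k,
    slice_x ((h2.differentiable hle1) _) k, slice_x ((h3.differentiable hle1) _) k]
  ring

lemma pd_comb_V {f₀ f₁ f₂ : ℝ × Eucl n → ℂ}
    (h0 : ContDiff ℝ (⊤:ℕ∞) f₀) (h1 : ContDiff ℝ (⊤:ℕ∞) f₁) (h2 : ContDiff ℝ (⊤:ℕ∞) f₂)
    {Vf : Eucl n → ℝ} {x : Eucl n} (hVf : DifferentiableAt ℝ Vf x)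
    (c₀ c₁ : ℂ) (j : Fin n) (t : ℝ) :
    pd j (fun y => c₀ * f₀ (t, y) + c₁ * f₁ (t, y) - ((Vf y : ℝ) : ℂ) * f₂ (t, y)) x
      = c₀ * fderiv ℝ f₀ (t,x) (0, EuclideanSpace.single j 1)
        + c₁ * fderiv ℝ f₁ (t,x) (0, EuclideanSpace.single j 1)
        - ((fderiv ℝ Vf x (EuclideanSpace.single j 1) : ℝ) : ℂ) * f₂ (t,x)
        - ((Vf x : ℝ) : ℂ) * fderiv ℝ f₂ (t,x) (0, EuclideanSpace.single j 1) := by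
  have d0 : DifferentiableAt ℝ (fun y => c₀ * f₀ (t, y)) x := (dslice h0 t x).const_mul c₀
  have d1 : DifferentiableAt ℝ (fun y => c₁ * f₁ (t, y)) x := (dslice h1 t x).const_mul c₁
  have d2 : DifferentiableAt ℝ (fun y : Eucl n => ((Vf y : ℝ) : ℂ) * f₂ (t, y)) x :=
    ((Complex.ofRealCLM.differentiableAt).comp x hVf).mul (dslice h2 t x)
  rw [pd_sub j (d0.fun_add d1) d2, pd_add j d0 d1,
    pd_const_mul j c₀ (dslice h0 t x), pd_const_mul j c₁ (dslice h1 t x),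
    pd_real_mul j hVf (dslice h2 t x),
    slice_x ((h0.differentiable hle1) _) j, slice_x ((h1.differentiable hle1) _) j,
    slice_x ((h2.differentiable hle1) _) j]
  ring

lemma swap13 {f : ℝ × Eucl n → ℂ} (hf : ContDiff ℝ (⊤:ℕ∞) f) (p a b v : ℝ × Eucl n) :
    fderiv ℝ (fun q => fderiv ℝ (fun r => fderiv ℝ f r a) q b) p v
      = fderiv ℝ (fun q => fderiv ℝ (fun r => fderiv ℝ f r v) q b) p a := by
  have e1 : (fun q => fderiv ℝ (fun r => fderiv ℝ f r a) q b)
      = fun q => fderiv ℝ (fun r => fderiv ℝ f r b) q a :=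
    funext fun q => fderiv_swap hf q a b
  have e2 : (fun q => fderiv ℝ (fun r => fderiv ℝ f r b) q v)
      = fun q => fderiv ℝ (fun r => fderiv ℝ f r v) q b :=
    funext fun q => fderiv_swap hf q b v
  rw [e1, fderiv_swap (cd_fderiv_apply hf b) p a v, e2]

/-- Directional derivative operator on the product space. -/
def D1 {n : ℕ} (f : ℝ × Eucl n → ℂ) (v : ℝ × Eucl n) : ℝ × Eucl n → ℂ :=
  fun pt => fderiv ℝ f pt v

/-- Spatial unit direction. -/
def wv {n : ℕ} (i : Fin n) : ℝ × Eucl n := ((0:ℝ), EuclideanSpace.single i 1)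

/-- Time direction. -/
def tv {n : ℕ} : ℝ × Eucl n := ((1:ℝ), (0:Eucl n))

/-- The space-time function associated to `u`. -/
def Fof {n : ℕ} (u : ℝ → Eucl n → ℂ) : ℝ × Eucl n → ℂ := fun pt => u pt.1 pt.2

lemma D1_cd {f : ℝ × Eucl n → ℂ} (hf : ContDiff ℝ (⊤:ℕ∞) f) (v : ℝ × Eucl n) :
    ContDiff ℝ (⊤:ℕ∞) (D1 f v) := cd_fderiv_apply hf v

lemma D1_swap {f : ℝ × Eucl n → ℂ} (hf : ContDiff ℝ (⊤:ℕ∞) f) (p v w : ℝ × Eucl n) :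
    D1 (D1 f v) w p = D1 (D1 f w) v p := fderiv_swap hf p v w

lemma D1_swap13 {f : ℝ × Eucl n → ℂ} (hf : ContDiff ℝ (⊤:ℕ∞) f) (p a b v : ℝ × Eucl n) :
    D1 (D1 (D1 f a) b) v p = D1 (D1 (D1 f v) b) a p := swap13 hf p a b v

lemma pd_comb4' {f₀ f₁ f₂ f₃ : ℝ × Eucl n → ℂ}
    (h0 : ContDiff ℝ (⊤:ℕ∞) f₀) (h1 : ContDiff ℝ (⊤:ℕ∞) f₁) (h2 : ContDiff ℝ (⊤:ℕ∞) f₂)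
    (h3 : ContDiff ℝ (⊤:ℕ∞) f₃) (c₀ c₁ c₃ : ℂ) (a : ℝ) (i k : Fin n) (t : ℝ) (x : Eucl n) :
    pd k (fun y => c₀ * f₀ (t, y) + c₁ * f₁ (t, y)
        + ((a * y i : ℝ) : ℂ) * f₂ (t, y) + c₃ * f₃ (t, y)) x
      = c₀ * D1 f₀ (wv k) (t,x) + c₁ * D1 f₁ (wv k) (t,x)
        + ((a * (if k = i then 1 else 0) : ℝ) : ℂ) * f₂ (t,x)
        + ((a * x i : ℝ) : ℂ) * D1 f₂ (wv k) (t,x) + c₃ * D1 f₃ (wv k) (t,x) :=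
  pd_comb4 h0 h1 h2 h3 c₀ c₁ c₃ a i k t x

lemma pd_comb_V' {f₀ f₁ f₂ : ℝ × Eucl n → ℂ}
    (h0 : ContDiff ℝ (⊤:ℕ∞) f₀) (h1 : ContDiff ℝ (⊤:ℕ∞) f₁) (h2 : ContDiff ℝ (⊤:ℕ∞) f₂)
    {Vf : Eucl n → ℝ} {x : Eucl n} (hVf : DifferentiableAt ℝ Vf x)
    (c₀ c₁ : ℂ) (j : Fin n) (t : ℝ) :
    pd j (fun y => c₀ * f₀ (t, y) + c₁ * f₁ (t, y) - ((Vf y : ℝ) : ℂ) * f₂ (t, y)) x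
      = c₀ * D1 f₀ (wv j) (t,x) + c₁ * D1 f₁ (wv j) (t,x)
        - ((fderiv ℝ Vf x (EuclideanSpace.single j 1) : ℝ) : ℂ) * f₂ (t,x)
        - ((Vf x : ℝ) : ℂ) * D1 f₂ (wv j) (t,x) :=
  pd_comb_V h0 h1 h2 hVf c₀ c₁ j t

end Helpers


lemma key {n : ℕ} (ε : ℝ) (hε : ε ≠ 0) (δ ω : Fin n → ℝ) (j : Fin n)
    (u : ℝ → Eucl n → ℂ)
    (hu : ContDiff ℝ (⊤ : ℕ∞) (fun p : ℝ × Eucl n => u p.1 p.2))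
    (p q p' q' : ℝ → ℝ)
    (hp : ∀ s, HasDerivAt p (p' s) s) (hq : ∀ s, HasDerivAt q (q' s) s)
    (h1 : ∀ s, ε * p' s = -(δ j * (ω j)^2) * q s)
    (h2 : ∀ s, q' s = ε * p s)
    (V : Eucl n → ℝ) (hV : V = fun y => ∑ m, δ m * (ω m)^2 / 2 * (y m)^2)
    (t : ℝ) (x : Eucl n) :
    Lop ε V (fun s y => ((p s * y j : ℝ) : ℂ) * u s y
        + Complex.I * ((q s : ℝ) : ℂ) * pd j (u s) y) t x
      = ((p t * x j : ℝ) : ℂ) * Lop ε V u t x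
        + Complex.I * ((q t : ℝ) : ℂ) * pd j (Lop ε V u t) x := by
  classical
  have hF : ContDiff ℝ (⊤:ℕ∞) (Fof u) := hu
  have hd1 : ∀ v, ContDiff ℝ (⊤:ℕ∞) (D1 (Fof u) v) := fun v => D1_cd hF v
  have hd2 : ∀ v v', ContDiff ℝ (⊤:ℕ∞) (D1 (D1 (Fof u) v) v') := fun v v' => D1_cd (hd1 v) v'
  have hS : ContDiff ℝ (⊤:ℕ∞) (fun r => ∑ k, D1 (D1 (Fof u) (wv k)) (wv k) r) :=
    ContDiff.sum fun k _ => hd2 (wv k) (wv k)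
  have epd : ∀ (i : Fin n) (s : ℝ) (y : Eucl n), pd i (u s) y = D1 (Fof u) (wv i) (s, y) :=
    fun i s y => slice_x ((hF.differentiable hle1) _) i
  have epdf : ∀ (i : Fin n) (s : ℝ), pd i (u s) = fun y => D1 (Fof u) (wv i) (s, y) :=
    fun i s => funext (epd i s)
  have epd2 : ∀ (i k : Fin n) (s : ℝ) (y : Eucl n),
      pd k (pd i (u s)) y = D1 (D1 (Fof u) (wv i)) (wv k) (s, y) := by
    intro i k s y
    rw [epdf i s]
    exact slice_x (((hd1 (wv i)).differentiable hle1) _) k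
  have edt : ∀ (s : ℝ) (y : Eucl n), deriv (fun s' => u s' y) s = D1 (Fof u) tv (s, y) :=
    fun s y => slice_t ((hF.differentiable hle1) _)
  have elap : ∀ (s : ℝ) (y : Eucl n),
      lap (u s) y = ∑ k, D1 (D1 (Fof u) (wv k)) (wv k) (s, y) := by
    intro s y; rw [lap]; exact Finset.sum_congr rfl fun k _ => epd2 k k s y
  -- potential facts
  have hVdiff : DifferentiableAt ℝ V x := by
    rw [hV]; exact diff_V (fun m => δ m * (ω m)^2/2) x
  have hVd : fderiv ℝ V x (EuclideanSpace.single j 1) = δ j * (ω j)^2 * x j := by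
    rw [hV]
    exact (fderiv_V_apply (fun m => δ m * (ω m)^2/2) x j).trans (by ring)
  -- time derivative of the LHS
  have hT1 : deriv (fun s => ((p s * x j : ℝ):ℂ) * u s x
        + Complex.I * ((q s : ℝ):ℂ) * pd j (u s) x) t
      = ((p' t * x j : ℝ) : ℂ) * Fof u (t,x) + ((p t * x j : ℝ) : ℂ) * D1 (Fof u) tv (t,x)
        + Complex.I * ((q' t : ℝ):ℂ) * D1 (Fof u) (wv j) (t,x)
        + Complex.I * ((q t : ℝ):ℂ) * D1 (D1 (Fof u) (wv j)) tv (t,x) := by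
    have hA : HasDerivAt (fun s => ((p s * x j : ℝ) : ℂ)) ((p' t * x j : ℝ) : ℂ) t :=
      ((hp t).mul_const (x j)).ofReal_comp
    have hB : HasDerivAt (fun s => u s x) (D1 (Fof u) tv (t,x)) t :=
      hasDerivAt_slice_t ((hF.differentiable hle1) _)
    have hC : HasDerivAt (fun s => Complex.I * ((q s : ℝ) : ℂ)) (Complex.I * ((q' t : ℝ) : ℂ)) t :=
      ((hq t).ofReal_comp).const_mul Complex.I
    have hD : HasDerivAt (fun s => pd j (u s) x) (D1 (D1 (Fof u) (wv j)) tv (t,x)) t := by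
      have e : (fun s => pd j (u s) x) = fun s => D1 (Fof u) (wv j) (s, x) :=
        funext fun s => epd j s x
      rw [e]
      exact hasDerivAt_slice_t (((hd1 (wv j)).differentiable hle1) _)
    rw [((hA.fun_mul hB).fun_add (hC.fun_mul hD)).deriv, epd j t x,
      show u t x = Fof u (t,x) from rfl]
    ring
  -- the first spatial derivative of the LHS state
  have eA : (fun y => ((p t * y j : ℝ):ℂ) * u t y
        + Complex.I * ((q t : ℝ):ℂ) * pd j (u t) y)
      = fun y => (0:ℂ) * Fof u (t,y) + (0:ℂ) * Fof u (t,y)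
          + ((p t * y j : ℝ) : ℂ) * Fof u (t,y)
          + (Complex.I * ((q t : ℝ):ℂ)) * D1 (Fof u) (wv j) (t,y) := by
    funext y
    rw [epd j t y, show u t y = Fof u (t,y) from rfl]
    ring
  have hpdA : ∀ (k : Fin n),
      pd k (fun y => ((p t * y j : ℝ):ℂ) * u t y
          + Complex.I * ((q t : ℝ):ℂ) * pd j (u t) y)
        = fun x' => ((p t * (if k = j then 1 else 0) : ℝ) : ℂ) * Fof u (t,x')
            + (0:ℂ) * Fof u (t,x')
            + ((p t * x' j : ℝ) : ℂ) * D1 (Fof u) (wv k) (t,x')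
            + (Complex.I * ((q t : ℝ):ℂ)) * D1 (D1 (Fof u) (wv j)) (wv k) (t,x') := by
    intro k
    funext x'
    rw [eA, pd_comb4' hF hF hF (hd1 (wv j)) 0 0 (Complex.I * ((q t : ℝ):ℂ)) (p t) j k t x']
    ring
  have hpdA2 : ∀ (k : Fin n),
      pd k (pd k (fun y => ((p t * y j : ℝ):ℂ) * u t y
          + Complex.I * ((q t : ℝ):ℂ) * pd j (u t) y)) x
        = 2 * ((p t * (if k = j then 1 else 0) : ℝ) : ℂ) * D1 (Fof u) (wv k) (t,x)
          + ((p t * x j : ℝ) : ℂ) * D1 (D1 (Fof u) (wv k)) (wv k) (t,x)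
          + (Complex.I * ((q t : ℝ):ℂ)) * D1 (D1 (D1 (Fof u) (wv j)) (wv k)) (wv k) (t,x) := by
    intro k
    rw [hpdA k,
      pd_comb4' hF hF (hd1 (wv k)) (hd2 (wv j) (wv k))
        ((p t * (if k = j then 1 else 0) : ℝ) : ℂ) 0 (Complex.I * ((q t : ℝ):ℂ)) (p t) j k t x]
    ring
  have hlapA : lap (fun y => ((p t * y j : ℝ):ℂ) * u t y
        + Complex.I * ((q t : ℝ):ℂ) * pd j (u t) y) x
      = 2 * ((p t : ℝ):ℂ) * D1 (Fof u) (wv j) (t,x)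
        + ((p t * x j : ℝ):ℂ) * ∑ k, D1 (D1 (Fof u) (wv k)) (wv k) (t,x)
        + Complex.I * ((q t : ℝ):ℂ)
            * ∑ k, D1 (D1 (D1 (Fof u) (wv j)) (wv k)) (wv k) (t,x) := by
    rw [lap, Finset.sum_congr rfl fun k _ => hpdA2 k, Finset.sum_add_distrib,
      Finset.sum_add_distrib]
    have e1 : ∑ k, 2 * ((p t * (if k = j then 1 else 0) : ℝ) : ℂ) * D1 (Fof u) (wv k) (t,x)
        = 2 * ((p t : ℝ):ℂ) * D1 (Fof u) (wv j) (t,x) := by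
      rw [Finset.sum_eq_single j]
      · simp
      · intro b _ hb; simp [hb]
      · simp
    rw [e1, ← Finset.mul_sum, ← Finset.mul_sum]
  -- the RHS: pd j of (Lop u)
  have eLop : Lop ε V u t
      = fun y => Complex.I * (ε:ℂ) * D1 (Fof u) tv (t,y)
          + ((ε:ℂ)^2/2) * ((fun r => ∑ k, D1 (D1 (Fof u) (wv k)) (wv k) r) (t,y))
          - ((V y : ℝ) : ℂ) * Fof u (t,y) := by
    funext y
    simp only [Lop]
    rw [edt t y, elap t y]
    rfl
  have eS : D1 (fun r => ∑ k, D1 (D1 (Fof u) (wv k)) (wv k) r) (wv j) (t,x)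
      = ∑ k, D1 (D1 (D1 (Fof u) (wv j)) (wv k)) (wv k) (t,x) := by
    show fderiv ℝ (fun r => ∑ k, D1 (D1 (Fof u) (wv k)) (wv k) r) (t,x) (wv j) = _
    rw [fderiv_fun_sum (fun k _ => ((hd2 (wv k) (wv k)).differentiable hle1) _),
      ContinuousLinearMap.sum_apply]
    exact Finset.sum_congr rfl fun k _ => D1_swap13 hF (t,x) (wv k) (wv k) (wv j)
  have hpdLop : pd j (Lop ε V u t) x
      = Complex.I * (ε:ℂ) * D1 (D1 (Fof u) (wv j)) tv (t,x)
        + ((ε:ℂ)^2/2) * ∑ k, D1 (D1 (D1 (Fof u) (wv j)) (wv k)) (wv k) (t,x)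
        - ((δ j * (ω j)^2 * x j : ℝ) : ℂ) * Fof u (t,x)
        - ((V x : ℝ) : ℂ) * D1 (Fof u) (wv j) (t,x) := by
    rw [eLop,
      pd_comb_V' (hd1 tv) hS hF hVdiff (Complex.I * (ε:ℂ)) ((ε:ℂ)^2/2) j t,
      hVd, eS, D1_swap hF (t,x) tv (wv j)]
  -- assemble
  simp only [Lop]
  rw [hT1, hlapA, edt t x, elap t x, hpdLop, epd j t x,
    show u t x = Fof u (t,x) from rfl]
  have hεc : (ε : ℂ) ≠ 0 := by exact_mod_cast hε
  have hp'c : ((p' t : ℝ) : ℂ) = -(((δ j : ℝ):ℂ) * ((ω j : ℝ):ℂ)^2) * ((q t : ℝ):ℂ) / (ε:ℂ) := by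
    have h := h1 t
    have hc : ((ε * p' t : ℝ) : ℂ) = ((-(δ j * (ω j)^2) * q t : ℝ) : ℂ) := by exact_mod_cast h
    push_cast at hc
    rw [eq_div_iff hεc]
    linear_combination hc
  have hq'c : ((q' t : ℝ) : ℂ) = (ε:ℂ) * ((p t : ℝ):ℂ) := by exact_mod_cast h2 t
  push_cast
  rw [hp'c, hq'c]
  field_simp
  linear_combination (2*(ε:ℂ)^2 * ((p t : ℝ):ℂ) * D1 (Fof u) (wv j) (t,x)) * Complex.I_sq


lemma gh_deriv (δ0 ω0 : ℝ) (hδ0 : δ0 = -1 ∨ δ0 = 0 ∨ δ0 = 1) (hω0 : ω0 ≠ 0) (s : ℝ) :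
    HasDerivAt (gfun δ0 ω0) (hfun δ0 ω0 s) s ∧
      HasDerivAt (hfun δ0 ω0) (-δ0 * ω0^2 * gfun δ0 ω0 s) s := by
  have hlin : HasDerivAt (fun t : ℝ => ω0 * t) ω0 s := by
    simpa using (hasDerivAt_id s).const_mul ω0
  rcases hδ0 with h|h|h <;> subst h
  · have e1 : gfun (-1) ω0 = fun t => Real.sinh (ω0*t) / ω0 := by
      funext t; simp [gfun]
    have e2 : hfun (-1) ω0 = fun t => Real.cosh (ω0*t) := by
      funext t; simp [hfun]
    rw [e1, e2]
    constructor
    · have := ((Real.hasDerivAt_sinh (ω0*s)).comp s hlin).div_const ω0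
      refine this.congr_deriv ?_
      field_simp
    · have := (Real.hasDerivAt_cosh (ω0*s)).comp s hlin
      refine this.congr_deriv ?_
      field_simp
  · have e1 : gfun 0 ω0 = fun t => t := by
      funext t; norm_num [gfun]
    have e2 : hfun 0 ω0 = fun _ => 1 := by
      funext t; norm_num [hfun]
    rw [e1, e2]
    constructor
    · exact hasDerivAt_id s
    · simpa using (hasDerivAt_const s (1:ℝ))
  · have e1 : gfun 1 ω0 = fun t => Real.sin (ω0*t) / ω0 := by
      funext t; norm_num [gfun]
    have e2 : hfun 1 ω0 = fun t => Real.cos (ω0*t) := by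
      funext t; norm_num [hfun]
    rw [e1, e2]
    constructor
    · have := ((Real.hasDerivAt_sin (ω0*s)).comp s hlin).div_const ω0
      refine this.congr_deriv ?_
      field_simp
    · have := (Real.hasDerivAt_cos (ω0*s)).comp s hlin
      refine this.congr_deriv ?_
      field_simp

/-- **Commutation of the Heisenberg observables with the quadratic Hamiltonian.**
For `V(x) = Σ_j δ_j (ω_j²/2) x_j²` with `δ_j ∈ {−1,0,1}`, `ω_j > 0`, and every smooth
`u : ℝ × ℝⁿ → ℂ`, the operators `J_j` and `H_j` commute pointwise with
`L = iε∂ₜ + (ε²/2)Δ − V`. -/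
theorem heisenberg_observables_commute
    (n : ℕ) (hn : 1 ≤ n) (ε : ℝ) (hε : 0 < ε)
    (δ ω : Fin n → ℝ) (hδ : ∀ j, δ j = -1 ∨ δ j = 0 ∨ δ j = 1) (hω : ∀ j, 0 < ω j)
    (V : Eucl n → ℝ) (hV : V = fun x => ∑ j, δ j * (ω j)^2 / 2 * (x j)^2)
    (u : ℝ → Eucl n → ℂ)
    (hu : ContDiff ℝ (⊤ : ℕ∞) (fun p : ℝ × Eucl n => u p.1 p.2)) :
    ∀ j : Fin n, ∀ t : ℝ, ∀ x : Eucl n,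
      Lop ε V (Jop ε δ ω j u) t x = Jop ε δ ω j (Lop ε V u) t x ∧
      Lop ε V (Hop ε δ ω j u) t x = Hop ε δ ω j (Lop ε V u) t x := by
  intro j t x
  have hωj : ω j ≠ 0 := (hω j).ne'
  have hde := fun s => gh_deriv (δ j) (ω j) (hδ j) hωj s
  have hεne : ε ≠ 0 := hε.ne'
  constructor
  · -- J part
    have eJ : ∀ w : ℝ → Eucl n → ℂ, Jop ε δ ω j w
        = fun s y => (((-(δ j) * (ω j)^2 * gfun (δ j) (ω j) s / ε) * y j : ℝ):ℂ) * w s y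
            + Complex.I * ((hfun (δ j) (ω j) s : ℝ):ℂ) * pd j (w s) y := by
      intro w
      funext s y
      simp only [Jop]
      rw [show -(δ j) * (ω j)^2 * gfun (δ j) (ω j) s * (y j / ε)
          = -(δ j) * (ω j)^2 * gfun (δ j) (ω j) s / ε * y j from by ring]
    have hkey := key ε hεne δ ω j u hu
      (fun s => -(δ j) * (ω j)^2 * gfun (δ j) (ω j) s / ε)
      (fun s => hfun (δ j) (ω j) s)
      (fun s => -(δ j) * (ω j)^2 * hfun (δ j) (ω j) s / ε)
      (fun s => -(δ j) * (ω j)^2 * gfun (δ j) (ω j) s)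
      (fun s => ((hde s).1.const_mul (-(δ j) * (ω j)^2)).div_const ε)
      (fun s => (hde s).2)
      (fun s => by field_simp)
      (fun s => by field_simp)
      V hV t x
    rw [eJ u, eJ (Lop ε V u)]
    exact hkey
  · -- H part
    have eH : ∀ w : ℝ → Eucl n → ℂ, Hop ε δ ω j w
        = fun s y => ((hfun (δ j) (ω j) s * y j : ℝ):ℂ) * w s y
            + Complex.I * ((ε * gfun (δ j) (ω j) s : ℝ):ℂ) * pd j (w s) y := by
      intro w
      funext s y
      simp only [Hop]
      push_cast
      ring
    have hkey := key ε hεne δ ω j u hu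
      (fun s => hfun (δ j) (ω j) s)
      (fun s => ε * gfun (δ j) (ω j) s)
      (fun s => -(δ j) * (ω j)^2 * gfun (δ j) (ω j) s)
      (fun s => ε * hfun (δ j) (ω j) s)
      (fun s => (hde s).2)
      (fun s => (hde s).1.const_mul ε)
      (fun s => by ring)
      (fun s => by ring)
      V hV t x
    rw [eH u, eH (Lop ε V u)]
    exact hkey
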